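/- Let S(m,n) = (1/(√(2π)·m!)) ∫₀^∞ He_m(x) He_n(x) e^{−x²/2} dx and K(m,n) = (2π)^{−1/2} He_{m−1}(0) He_n(0) / m!. For all m ≥ 1 and n ≥ 1, S(m,n) = K(m,n) + (n/m)·S(m−1, n−1). -/

import Mathlib

open MeasureTheory Real

/-- Probabilists' Hermite polynomial `He n x`, with the convention `He n ≡ 0` for `n < 0`. -/
noncomputable def He (n : ℤ) (x : ℝ) : ℝ :=
  if n < 0 then 0 else Polynomial.aeval x (Polynomial.hermite n.toNat)

/-- `S m n = (1/(√(2π)·m!)) ∫₀^∞ He_m(x) He_n(x) e^{−x²/2} dx`. -/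
noncomputable def S (m n : ℕ) : ℝ :=
  (1 / (Real.sqrt (2 * Real.pi) * (Nat.factorial m))) *
    ∫ x in Set.Ioi (0 : ℝ), He m x * He n x * Real.exp (-x ^ 2 / 2)

/-- `K(m,n) = (2π)^{−1/2} He_{m−1}(0) He_n(0) / m!`. -/
noncomputable def K (m n : ℕ) : ℝ :=
  (2 * Real.pi) ^ (-(1 / 2 : ℝ)) / (Nat.factorial m) * He ((m : ℤ) - 1) 0 * He n 0

open Polynomial in
lemma derivative_hermite : ∀ n : ℕ, Polynomial.derivative (Polynomial.hermite (n+1))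
    = ((n : ℤ[X]) + 1) * Polynomial.hermite n
  | 0 => by simp [Polynomial.hermite_succ, Polynomial.hermite_zero]
  | (n+1) => by
    rw [Polynomial.hermite_succ (n+1), derivative_sub, derivative_mul, derivative_X, one_mul,
      derivative_hermite n, derivative_mul, Polynomial.hermite_succ n, derivative_add,
      derivative_natCast, derivative_one]
    push_cast
    ring

open Polynomial in
lemma aeval_derivative_hermite (n : ℕ) (x : ℝ) :
    Polynomial.aeval x (Polynomial.derivative (Polynomial.hermite (n+1)))
      = ((n : ℝ) + 1) * Polynomial.aeval x (Polynomial.hermite n) := by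
  rw [derivative_hermite, map_mul]
  simp

open Polynomial in
lemma integrable_poly_gauss (p : ℤ[X]) :
    Integrable fun x : ℝ => Polynomial.aeval x p * Real.exp (-x ^ 2 / 2) := by
  induction p using Polynomial.induction_on' with
  | monomial n c =>
      have h0 := integrable_rpow_mul_exp_neg_mul_sq (b := (1/2 : ℝ)) (by norm_num)
        (s := (n : ℝ)) (lt_of_lt_of_le neg_one_lt_zero (Nat.cast_nonneg n))
      have h : Integrable fun x : ℝ => x ^ n * Real.exp (-(1/2 : ℝ) * x ^ 2) :=
        h0.congr (Filter.Eventually.of_forall fun x => by simp [Real.rpow_natCast])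
      refine (h.const_mul (c : ℝ)).congr (Filter.Eventually.of_forall fun x => ?_)
      simp [Polynomial.aeval_monomial]
      ring_nf
  | add p q hp hq =>
      refine (hp.add hq).congr (Filter.Eventually.of_forall fun x => ?_)
      simp [add_mul]

open Polynomial in
lemma tendsto_poly_gauss (p : ℤ[X]) :
    Filter.Tendsto (fun x : ℝ => Polynomial.aeval x p * Real.exp (-x ^ 2 / 2))
      Filter.atTop (nhds 0) := by
  have h1 : Filter.Tendsto (fun x : ℝ => (p.map (Int.castRingHom ℝ)).eval x / Real.exp x)
      Filter.atTop (nhds 0) := Polynomial.tendsto_div_exp_atTop _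
  have hle : (fun x : ℝ => x - x ^ 2 / 2) ≤ᶠ[Filter.atTop] (fun x : ℝ => -x) := by
    filter_upwards [Filter.eventually_ge_atTop (4 : ℝ)] with x hx
    nlinarith
  have h2 : Filter.Tendsto (fun x : ℝ => Real.exp (x - x ^ 2 / 2)) Filter.atTop (nhds 0) :=
    Real.tendsto_exp_atBot.comp
      (Filter.tendsto_atBot_mono' _ hle Filter.tendsto_neg_atTop_atBot)
  have h := h1.mul h2
  rw [mul_zero] at h
  refine h.congr fun x => ?_
  have hx : Polynomial.aeval x p = (p.map (Int.castRingHom ℝ)).eval x := by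
    rw [Polynomial.aeval_def, Polynomial.eval_map]; rfl
  rw [hx, div_mul_eq_mul_div, mul_div_assoc, ← Real.exp_sub]
  congr 1
  ring

lemma He_natCast (k : ℕ) (x : ℝ) : He (k : ℤ) x = Polynomial.aeval x (Polynomial.hermite k) := by
  simp [He]

/-- For all `m ≥ 1` and `n ≥ 1`, `S(m,n) = K(m,n) + (n/m)·S(m−1, n−1)`. -/
theorem S_recursion (m n : ℕ) (hm : 1 ≤ m) (hn : 1 ≤ n) :
    S m n = K m n + ((n : ℝ) / m) * S (m - 1) (n - 1) := by
  obtain ⟨a, rfl⟩ : ∃ a, m = a + 1 := ⟨m - 1, (Nat.succ_pred_eq_of_pos hm).symm⟩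
  obtain ⟨b, rfl⟩ : ∃ b, n = b + 1 := ⟨n - 1, (Nat.succ_pred_eq_of_pos hn).symm⟩
  set A : ℝ → ℝ := fun x => Polynomial.aeval x (Polynomial.hermite a) with hA_def
  set A' : ℝ → ℝ := fun x => Polynomial.aeval x (Polynomial.hermite (a+1)) with hA'_def
  set B : ℝ → ℝ := fun x => Polynomial.aeval x (Polynomial.hermite b) with hB_def
  set B' : ℝ → ℝ := fun x => Polynomial.aeval x (Polynomial.hermite (b+1)) with hB'_def
  set E : ℝ → ℝ := fun x => Real.exp (-x ^ 2 / 2) with hE_def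
  -- integrabilities
  have int1 : IntegrableOn (fun x => A' x * B' x * E x) (Set.Ioi (0:ℝ)) := by
    refine ((integrable_poly_gauss (Polynomial.hermite (a+1) * Polynomial.hermite (b+1))).congr
      (Filter.Eventually.of_forall fun x => by simp [map_mul, hA'_def, hB'_def, hE_def])).integrableOn
  have int2 : IntegrableOn (fun x => A x * B x * E x) (Set.Ioi (0:ℝ)) := by
    refine ((integrable_poly_gauss (Polynomial.hermite a * Polynomial.hermite b)).congr
      (Filter.Eventually.of_forall fun x => by simp [map_mul, hA_def, hB_def, hE_def])).integrableOn
  -- derivative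
  have hderiv : ∀ x ∈ Set.Ici (0:ℝ),
      HasDerivAt (fun x => -(A x * B' x * E x))
        (A' x * B' x * E x - ((b:ℝ)+1) * (A x * B x * E x)) x := by
    intro x _
    have hA := (Polynomial.hermite a).hasDerivAt_aeval (𝕜 := ℝ) x
    have hB := (Polynomial.hermite (b+1)).hasDerivAt_aeval (𝕜 := ℝ) x
    have harg : HasDerivAt (fun x : ℝ => -x ^ 2 / 2) (-x) x := by
      have h2 := ((hasDerivAt_pow 2 x).neg.div_const 2)
      refine h2.congr_deriv ?_
      push_cast
      ring
    have hE : HasDerivAt E (Real.exp (-x ^ 2 / 2) * (-x)) x := harg.exp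
    have h := ((hA.mul hB).mul hE).neg
    refine h.congr_deriv ?_
    have hsucc : A' x = x * A x - Polynomial.aeval x (Polynomial.derivative (Polynomial.hermite a)) := by
      rw [hA'_def, hA_def, Polynomial.hermite_succ]
      simp
    rw [hsucc, aeval_derivative_hermite b x]
    simp only [hE_def, hA_def, hB_def, hB'_def, Pi.mul_apply]
    ring
  -- integrable derivative
  have hint : IntegrableOn
      (fun x => A' x * B' x * E x - ((b:ℝ)+1) * (A x * B x * E x)) (Set.Ioi (0:ℝ)) :=
    int1.sub (int2.const_mul _)
  -- tendsto
  have htend : Filter.Tendsto (fun x => -(A x * B' x * E x)) Filter.atTop (nhds 0) := by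
    have := (tendsto_poly_gauss (Polynomial.hermite a * Polynomial.hermite (b+1))).neg
    rw [neg_zero] at this
    exact this.congr fun x => by simp [map_mul, hA_def, hB'_def, hE_def]
  have key := integral_Ioi_of_hasDerivAt_of_tendsto' hderiv hint htend
  rw [integral_sub int1 (int2.const_mul _), integral_const_mul] at key
  have key2 : (∫ x in Set.Ioi (0:ℝ), A' x * B' x * E x)
      = A 0 * B' 0 + ((b:ℝ)+1) * ∫ x in Set.Ioi (0:ℝ), A x * B x * E x := by
    have : (0:ℝ) - -(A 0 * B' 0 * E 0) = A 0 * B' 0 := by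
      simp [hE_def]
    rw [this] at key
    linarith [key]
  -- unfold S and K
  have hrw : (2 * Real.pi) ^ (-(1/2 : ℝ)) = (Real.sqrt (2 * Real.pi))⁻¹ := by
    rw [Real.rpow_neg (by positivity), ← Real.sqrt_eq_rpow]
  have hHe1 : ∀ x : ℝ, He (↑(a+1) : ℤ) x = A' x := fun x => by
    rw [He_natCast]
  have hHe2 : ∀ x : ℝ, He (↑(b+1) : ℤ) x = B' x := fun x => by
    rw [He_natCast]
  have hHe3 : ∀ x : ℝ, He (↑a : ℤ) x = A x := fun x => by rw [He_natCast]
  have hHe4 : ∀ x : ℝ, He (↑b : ℤ) x = B x := fun x => by rw [He_natCast]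
  have hHe5 : He ((↑(a+1) : ℤ) - 1) 0 = A 0 := by
    have : ((↑(a+1) : ℤ) - 1) = (a : ℤ) := by push_cast; ring
    rw [this, He_natCast]
  have hsub1 : a + 1 - 1 = a := rfl
  have hsub2 : b + 1 - 1 = b := rfl
  simp only [S, K, hsub1, hsub2]
  have e1 : (∫ x in Set.Ioi (0:ℝ), He ↑(a+1) x * He ↑(b+1) x * Real.exp (-x^2/2))
      = ∫ x in Set.Ioi (0:ℝ), A' x * B' x * E x := by
    refine integral_congr_ae (Filter.Eventually.of_forall fun x => ?_)
    simp only [hHe1, hHe2, hE_def]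
  have e2 : (∫ x in Set.Ioi (0:ℝ), He ↑a x * He ↑b x * Real.exp (-x^2/2))
      = ∫ x in Set.Ioi (0:ℝ), A x * B x * E x := by
    refine integral_congr_ae (Filter.Eventually.of_forall fun x => ?_)
    simp only [hHe3, hHe4, hE_def]
  rw [e1, e2, key2, hHe5, hHe2, hrw]
  have hsqrt : Real.sqrt (2 * Real.pi) ≠ 0 := by positivity
  have hfa : ((a.factorial : ℝ)) ≠ 0 := Nat.cast_ne_zero.mpr a.factorial_ne_zero
  have hfa1 : ((a+1 : ℕ).factorial : ℝ) ≠ 0 := Nat.cast_ne_zero.mpr (a+1).factorial_ne_zero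
  have hfact : ((a+1 : ℕ).factorial : ℝ) = ((a:ℝ)+1) * (a.factorial : ℝ) := by
    rw [Nat.factorial_succ]; push_cast; ring
  rw [hfact]
  have ha1 : ((a:ℝ)+1) ≠ 0 := by positivity
  push_cast
  field_simp
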